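/- Let p, q be positive integers, Σ a real p×p matrix, Σ̂ a real symmetric positive semidefinite p×p matrix, H a real q×p matrix, and R a real symmetric positive definite q×q matrix such that H Σ Hᵀ + R is invertible. Set K = Σ Hᵀ (H Σ Hᵀ + R)⁻¹ and K̂ = Σ̂ Hᵀ (H Σ̂ Hᵀ + R)⁻¹. Then ‖K̂ − K‖ ≤ λmin(R)⁻¹ · ‖I − K H‖ · ‖H‖ · ‖Σ̂ − Σ‖. -/

import Mathlib

set_option maxHeartbeats 1000000


open Matrix
open scoped Matrix.Norms.L2Operator

/-- The smallest eigenvalue of a Hermitian real matrix. -/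
noncomputable def lamMin {m : ℕ} {A : Matrix (Fin m) (Fin m) ℝ} (hA : A.IsHermitian) : ℝ :=
  ⨅ i, hA.eigenvalues i

/-- **Lemma 1 of the paper.** If `Σ̂` is symmetric positive semidefinite,
`R` is symmetric positive definite, and `H Σ Hᵀ + R` is invertible, then the Kalman gains
`K = Σ Hᵀ (H Σ Hᵀ + R)⁻¹` and `K̂ = Σ̂ Hᵀ (H Σ̂ Hᵀ + R)⁻¹` satisfy
`‖K̂ − K‖ ≤ λmin(R)⁻¹ ‖I − K H‖ ‖H‖ ‖Σ̂ − Σ‖` in the spectral norm. -/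
theorem kalman_gain_error_bound (p q : ℕ) (hp : 0 < p) (hq : 0 < q)
    (S Shat : Matrix (Fin p) (Fin p) ℝ) (H : Matrix (Fin q) (Fin p) ℝ)
    (R : Matrix (Fin q) (Fin q) ℝ)
    (hShat : Shat.PosSemidef) (hR : R.PosDef)
    (h1 : IsUnit (H * S * Hᵀ + R).det) :
    ‖Shat * Hᵀ * (H * Shat * Hᵀ + R)⁻¹ - S * Hᵀ * (H * S * Hᵀ + R)⁻¹‖ ≤
      (lamMin hR.1)⁻¹ *
        ‖(1 : Matrix (Fin p) (Fin p) ℝ) - S * Hᵀ * (H * S * Hᵀ + R)⁻¹ * H‖ *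
        ‖H‖ * ‖Shat - S‖ := by
  have : Nonempty (Fin q) := ⟨⟨0, hq⟩⟩
  set A := H * S * Hᵀ + R with hAdef
  set B := H * Shat * Hᵀ + R with hBdef
  set c : ℝ := lamMin hR.1 with hcdef
  -- basic facts about c
  have hbdd : BddBelow (Set.range hR.1.eigenvalues) := Set.Finite.bddBelow (Set.finite_range _)
  have hle : ∀ i, c ≤ hR.1.eigenvalues i := fun i => ciInf_le hbdd i
  have hcpos : 0 < c := by
    obtain ⟨i, hi⟩ : ∃ i, ∀ j, hR.1.eigenvalues i ≤ hR.1.eigenvalues j :=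
      Finite.exists_min _
    have : c = hR.1.eigenvalues i := le_antisymm (hle i) (le_ciInf hi)
    rw [this]; exact hR.eigenvalues_pos i
  -- B is positive definite
  have hHt : Hᴴ = Hᵀ := by ext i j; simp [conjTranspose_apply]
  have hHSH : (H * Shat * Hᵀ).PosSemidef := hHt ▸ hShat.mul_mul_conjTranspose_same H
  have hBpd : B.PosDef := Matrix.PosDef.posSemidef_add hHSH hR
  have h2 : IsUnit B.det := hBpd.det_pos.ne'.isUnit
  have hAinv : A⁻¹ * A = 1 := nonsing_inv_mul A h1
  have hBinv : B * B⁻¹ = 1 := mul_nonsing_inv B h2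
  -- key algebraic identity
  have key : Shat * Hᵀ * B⁻¹ - S * Hᵀ * A⁻¹
      = (1 - S * Hᵀ * A⁻¹ * H) * ((Shat - S) * (Hᵀ * B⁻¹)) := by
    have e1 : H * (Shat - S) * Hᵀ = B - A := by
      simp only [Matrix.mul_sub, Matrix.sub_mul, hBdef, hAdef]
      abel
    have e2 : S * Hᵀ * A⁻¹ * H * ((Shat - S) * (Hᵀ * B⁻¹))
        = S * Hᵀ * A⁻¹ - S * Hᵀ * B⁻¹ := by
      calc S * Hᵀ * A⁻¹ * H * ((Shat - S) * (Hᵀ * B⁻¹))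
          = S * Hᵀ * (A⁻¹ * (H * (Shat - S) * Hᵀ) * B⁻¹) := by
            simp only [Matrix.mul_assoc]
        _ = S * Hᵀ * (A⁻¹ * (B - A) * B⁻¹) := by rw [e1]
        _ = S * Hᵀ * (A⁻¹ * (B * B⁻¹) - (A⁻¹ * A) * B⁻¹) := by
            simp only [Matrix.mul_sub, Matrix.sub_mul, mul_assoc]
        _ = S * Hᵀ * A⁻¹ - S * Hᵀ * B⁻¹ := by
            rw [hAinv, hBinv, Matrix.mul_one, Matrix.one_mul, Matrix.mul_sub]
    have e3 : (Shat - S) * (Hᵀ * B⁻¹) = Shat * Hᵀ * B⁻¹ - S * Hᵀ * B⁻¹ := by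
      simp only [Matrix.sub_mul, Matrix.mul_assoc]
    rw [Matrix.sub_mul, Matrix.one_mul, e2, e3]
    abel
  -- bound on ‖B⁻¹‖
  have hRay : ∀ x : Fin q → ℝ, c * (x ⬝ᵥ x) ≤ x ⬝ᵥ (B *ᵥ x) := by
    intro x
    have hRsub : (R - c • 1).PosSemidef := by
      set U : Matrix (Fin q) (Fin q) ℝ := (hR.1.eigenvectorUnitary : Matrix (Fin q) (Fin q) ℝ)
      have hU : U * star U = 1 := (Matrix.mem_unitaryGroup_iff).mp hR.1.eigenvectorUnitary.2
      have hspec := hR.1.spectral_theorem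
      have : R - c • 1 = U * diagonal (fun i => hR.1.eigenvalues i - c) * Uᴴ := by
        rw [← Matrix.star_eq_conjTranspose]
        have h1' : (c • (1 : Matrix (Fin q) (Fin q) ℝ)) = U * (c • 1) * star U := by
          simp only [Matrix.mul_smul, Matrix.smul_mul, Matrix.mul_one, hU]
        calc R - c • 1 = U * diagonal (RCLike.ofReal ∘ hR.1.eigenvalues) * star U
              - U * (c • 1) * star U := by
              rw [← h1']; congr 1
          _ = U * (diagonal (RCLike.ofReal ∘ hR.1.eigenvalues) - c • 1) * star U := by
              simp only [Matrix.sub_mul, Matrix.mul_sub]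
          _ = U * diagonal (fun i => hR.1.eigenvalues i - c) * star U := by
              congr 1
              congr 1
              rw [smul_one_eq_diagonal, diagonal_sub]
              rfl
      rw [this]
      exact (posSemidef_diagonal_iff.mpr fun i => sub_nonneg.2 (hle i)).mul_mul_conjTranspose_same U
    have h0 := hRsub.dotProduct_mulVec_nonneg x
    have hstar : star x = x := by ext i; simp
    rw [hstar, Matrix.sub_mulVec, dotProduct_sub, Matrix.smul_mulVec, Matrix.one_mulVec,
      dotProduct_smul, smul_eq_mul] at h0
    have hHx := hHSH.dotProduct_mulVec_nonneg x
    rw [hstar] at hHx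
    have hBx : x ⬝ᵥ (B *ᵥ x) = x ⬝ᵥ ((H * Shat * Hᵀ) *ᵥ x) + x ⬝ᵥ (R *ᵥ x) := by
      rw [hBdef, Matrix.add_mulVec, dotProduct_add]
    linarith
  have hBinvNorm : ‖B⁻¹‖ ≤ c⁻¹ := by
    rw [Matrix.l2_opNorm_def]
    refine ContinuousLinearMap.opNorm_le_bound _ (inv_nonneg.2 hcpos.le) (fun y => ?_)
    have happ : (LinearEquiv.trans toEuclideanLin LinearMap.toContinuousLinearMap (B⁻¹)) y
        = (WithLp.equiv 2 (Fin q → ℝ)).symm (B⁻¹ *ᵥ (WithLp.equiv 2 (Fin q → ℝ)) y) := rfl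
    rw [happ]
    set x : Fin q → ℝ := B⁻¹ *ᵥ (WithLp.equiv 2 (Fin q → ℝ)) y with hxdef
    set x' : EuclideanSpace ℝ (Fin q) := (WithLp.equiv 2 (Fin q → ℝ)).symm x with hx'def
    have hBx : B *ᵥ x = (WithLp.equiv 2 (Fin q → ℝ)) y := by
      rw [hxdef, Matrix.mulVec_mulVec, hBinv, Matrix.one_mulVec]
    have hxx : x ⬝ᵥ x = ‖x'‖ ^ 2 := by
      rw [← real_inner_self_eq_norm_sq, hx'def]
      change _ = x ⬝ᵥ star x
      rw [show star x = x from by ext i; simp]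
    have hCS : x ⬝ᵥ (B *ᵥ x) ≤ ‖x'‖ * ‖y‖ := by
      have : x ⬝ᵥ (B *ᵥ x) = inner ℝ x' ((WithLp.equiv 2 (Fin q → ℝ)).symm (B *ᵥ x)) := by
        rw [hx'def]
        change _ = (B *ᵥ x) ⬝ᵥ star x
        rw [show star x = x from by ext i; simp, dotProduct_comm]
      rw [this, hBx]
      have := real_inner_le_norm x' ((WithLp.equiv 2 (Fin q → ℝ)).symm ((WithLp.equiv 2 (Fin q → ℝ)) y))
      simpa using this
    have hkey : c * ‖x'‖ ^ 2 ≤ ‖x'‖ * ‖y‖ := by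
      calc c * ‖x'‖ ^ 2 = c * (x ⬝ᵥ x) := by rw [hxx]
        _ ≤ x ⬝ᵥ (B *ᵥ x) := hRay x
        _ ≤ ‖x'‖ * ‖y‖ := hCS
    rcases eq_or_lt_of_le (norm_nonneg x') with h0 | h0
    · rw [← h0]; positivity
    · have : c * ‖x'‖ ≤ ‖y‖ := by
        have := (mul_le_mul_iff_of_pos_right h0).mpr (le_refl (1:ℝ))
        nlinarith
      calc ‖x'‖ ≤ c⁻¹ * (c * ‖x'‖) := by
            rw [← mul_assoc, inv_mul_cancel₀ hcpos.ne', one_mul]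
        _ ≤ c⁻¹ * ‖y‖ := by
            exact mul_le_mul_of_nonneg_left this (inv_nonneg.2 hcpos.le)
  -- norm bound
  have hHT : ‖Hᵀ‖ = ‖H‖ := by rw [← hHt]; exact Matrix.l2_opNorm_conjTranspose H
  rw [key]
  calc ‖(1 - S * Hᵀ * A⁻¹ * H) * ((Shat - S) * (Hᵀ * B⁻¹))‖
      ≤ ‖1 - S * Hᵀ * A⁻¹ * H‖ * (‖Shat - S‖ * (‖Hᵀ‖ * ‖B⁻¹‖)) := by
        have m1 : ‖Hᵀ * B⁻¹‖ ≤ ‖Hᵀ‖ * ‖B⁻¹‖ := Matrix.l2_opNorm_mul _ _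
        have m2 : ‖(Shat - S) * (Hᵀ * B⁻¹)‖ ≤ ‖Shat - S‖ * (‖Hᵀ‖ * ‖B⁻¹‖) :=
          (Matrix.l2_opNorm_mul _ _).trans (mul_le_mul_of_nonneg_left m1 (norm_nonneg _))
        exact (Matrix.l2_opNorm_mul _ _).trans (mul_le_mul_of_nonneg_left m2 (norm_nonneg _))
    _ = ‖1 - S * Hᵀ * A⁻¹ * H‖ * ‖H‖ * ‖Shat - S‖ * ‖B⁻¹‖ := by rw [hHT]; ring
    _ ≤ ‖1 - S * Hᵀ * A⁻¹ * H‖ * ‖H‖ * ‖Shat - S‖ * c⁻¹ := by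
        gcongr
    _ = c⁻¹ * ‖1 - S * Hᵀ * A⁻¹ * H‖ * ‖H‖ * ‖Shat - S‖ := by ring
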